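/- With H ∈ ℂ^{m×m} invertible, η ∈ ℂ, H̄ = [H; η e_m^*], y^fom = H^{-1} β e_1, and y^gmres the least-squares minimizer of ‖β e_1 − H̄ y‖₂, define α = ‖η H^{-*} e_m‖₂, r^fom = (m+1)-vector β e_1 − H̄ y^fom, r^gmres = β e_1 − H̄ y^gmres. Then ‖r^fom − r^gmres‖₂ ≤ (α(1+α)/(1+α²)) ‖r^fom‖₂. -/

import Mathlib

open Matrix

noncomputable def norm2 {n : ℕ} (x : Fin n → ℂ) : ℝ :=
  ‖(WithLp.equiv 2 (Fin n → ℂ)).symm x‖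

lemma norm2_sq {n : ℕ} (x : Fin n → ℂ) : norm2 x ^ 2 = ∑ i, ‖x i‖ ^ 2 := by
  rw [norm2, EuclideanSpace.norm_eq, Real.sq_sqrt]
  · rfl
  · positivity

lemma norm2_nonneg {n : ℕ} (x : Fin n → ℂ) : 0 ≤ norm2 x := norm_nonneg _

lemma key_identity {E : Type*} [NormedAddCommGroup E] [InnerProductSpace ℂ E]
    (cd : E) (k : ℂ) (u : E) :
    ‖u‖ ^ 2 + ‖k * (1 + (‖cd‖ : ℂ) ^ 2) - (inner ℂ cd u : ℂ)‖ ^ 2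
      = ‖k‖ ^ 2 * (1 + ‖cd‖ ^ 2) + ‖u - k • cd‖ ^ 2
        + ‖(inner ℂ cd (u - k • cd) : ℂ)‖ ^ 2 := by
  set v := u - k • cd with hv
  have hu : u = k • cd + v := by rw [hv]; abel
  have hicd : (inner ℂ cd cd : ℂ) = (‖cd‖ : ℂ) ^ 2 := inner_self_eq_norm_sq_to_K cd
  have hinner : (inner ℂ cd u : ℂ) = k * (‖cd‖ : ℂ) ^ 2 + inner ℂ cd v := by
    rw [hu, inner_add_right, inner_smul_right, hicd]
  have hterm : k * (1 + (‖cd‖ : ℂ) ^ 2) - (inner ℂ cd u : ℂ) = k - inner ℂ cd v := by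
    rw [hinner]; ring
  rw [hterm, hu]
  rw [norm_add_sq (𝕜 := ℂ), inner_smul_left, norm_smul]
  have h2 : ‖k - (inner ℂ cd v : ℂ)‖ ^ 2
      = ‖k‖ ^ 2 - 2 * RCLike.re ((starRingEnd ℂ) k * (inner ℂ cd v : ℂ))
        + ‖(inner ℂ cd v : ℂ)‖ ^ 2 := by
    have h := norm_sub_sq (𝕜 := ℂ) (E := ℂ) k (inner ℂ cd v)
    rwa [RCLike.inner_apply'] at h
  rw [h2]
  ring

set_option maxHeartbeats 1000000 in
theorem stmt12 {m : ℕ} (H : Matrix (Fin (m + 1)) (Fin (m + 1)) ℂ)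
    (hH : IsUnit H) (η : ℂ) (β : ℝ) (hβ : 0 < β)
    (Hb : Matrix (Fin (m + 2)) (Fin (m + 1)) ℂ)
    (hTop : Hb.submatrix Fin.castSucc id = H)
    (hBot : ∀ j, Hb (Fin.last (m + 1)) j = η * (Pi.single (Fin.last m) (1 : ℂ) : Fin (m + 1) → ℂ) j)
    (yf yg : Fin (m + 1) → ℂ)
    (hyf : yf = H⁻¹ *ᵥ ((β : ℂ) • (Pi.single 0 1 : Fin (m + 1) → ℂ)))
    (hyg : ∀ z : Fin (m + 1) → ℂ,
      norm2 ((β : ℂ) • (Pi.single 0 1 : Fin (m + 2) → ℂ) - Hb *ᵥ yg) ≤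
        norm2 ((β : ℂ) • (Pi.single 0 1 : Fin (m + 2) → ℂ) - Hb *ᵥ z))
    (α : ℝ) (hα : α = norm2 (η • ((Hᴴ)⁻¹ *ᵥ (Pi.single (Fin.last m) 1 : Fin (m + 1) → ℂ)))) :
    norm2 (((β : ℂ) • (Pi.single 0 1 : Fin (m + 2) → ℂ) - Hb *ᵥ yf) -
        ((β : ℂ) • (Pi.single 0 1 : Fin (m + 2) → ℂ) - Hb *ᵥ yg)) ≤
      (α * (1 + α) / (1 + α ^ 2)) *
        norm2 ((β : ℂ) • (Pi.single 0 1 : Fin (m + 2) → ℂ) - Hb *ᵥ yf) := by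
  set b1 : Fin (m + 1) → ℂ := (β : ℂ) • (Pi.single 0 1 : Fin (m + 1) → ℂ) with hb1
  set b2 : Fin (m + 2) → ℂ := (β : ℂ) • (Pi.single 0 1 : Fin (m + 2) → ℂ) with hb2
  have hdet : IsUnit H.det := (Matrix.isUnit_iff_isUnit_det H).mp hH
  have hHI : ∀ v, H *ᵥ (H⁻¹ *ᵥ v) = v := fun v => by
    rw [Matrix.mulVec_mulVec, Matrix.mul_nonsing_inv _ hdet, Matrix.one_mulVec]
  have hIH : ∀ v, H⁻¹ *ᵥ (H *ᵥ v) = v := fun v => by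
    rw [Matrix.mulVec_mulVec, Matrix.nonsing_inv_mul _ hdet, Matrix.one_mulVec]
  set d : Fin (m + 1) → ℂ := fun j => η * H⁻¹ (Fin.last m) j with hd
  set s : (Fin (m + 1) → ℂ) → ℂ := fun u => ∑ j, d j * u j with hs
  have hs_eta : ∀ u : Fin (m + 1) → ℂ, s u = η * (H⁻¹ *ᵥ u) (Fin.last m) := by
    intro u
    simp only [hs, hd, Matrix.mulVec, dotProduct, Finset.mul_sum, mul_assoc]
  have hs_sub : ∀ u v : Fin (m + 1) → ℂ, s (u - v) = s u - s v := by
    intro u v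
    simp only [hs, Pi.sub_apply, mul_sub, Finset.sum_sub_distrib]
  have hηy : ∀ y : Fin (m + 1) → ℂ, η * y (Fin.last m) = s (H *ᵥ y) := by
    intro y; rw [hs_eta, hIH]
  set c : ℂ := s b1 with hc
  set A : ℝ := ∑ j, ‖d j‖ ^ 2 with hA
  have hA0 : 0 ≤ A := by positivity
  have hp : (0 : ℝ) < 1 + A := by linarith
  have h1A : ((1 + A : ℝ) : ℂ) ≠ 0 := by exact_mod_cast hp.ne'
  set k : ℂ := c / ((1 + A : ℝ) : ℂ) with hk
  have hck : c = k * ((1 + A : ℝ) : ℂ) := by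
    rw [hk, div_mul_cancel₀ _ h1A]
  set cd : Fin (m + 1) → ℂ := fun j => starRingEnd ℂ (d j) with hcd
  set us : Fin (m + 1) → ℂ := k • cd with hus
  set z : Fin (m + 1) → ℂ := H⁻¹ *ᵥ (b1 - us) with hz
  set ug : Fin (m + 1) → ℂ := b1 - H *ᵥ yg with hug
  -- component formulas for residuals
  have hRtop : ∀ (y : Fin (m + 1) → ℂ) (i : Fin (m + 1)),
      (b2 - Hb *ᵥ y) (Fin.castSucc i) = (b1 - H *ᵥ y) i := by
    intro y i
    have h1 : (Hb *ᵥ y) i.castSucc = (H *ᵥ y) i := by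
      rw [← hTop]
      simp [Matrix.mulVec, dotProduct, Matrix.submatrix_apply]
    have h2 : b2 i.castSucc = b1 i := by
      simp [hb1, hb2, Pi.single_apply, Fin.castSucc_eq_zero_iff]
    simp only [Pi.sub_apply, h1, h2]
  have hlast_ne : Fin.last (m + 1) ≠ 0 := by
    simp [Fin.ext_iff]
  have hRbot : ∀ (y : Fin (m + 1) → ℂ),
      (b2 - Hb *ᵥ y) (Fin.last (m + 1)) = -(η * y (Fin.last m)) := by
    intro y
    have h1 : (Hb *ᵥ y) (Fin.last (m + 1)) = η * y (Fin.last m) := by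
      simp only [Matrix.mulVec, dotProduct, hBot, Pi.single_apply, mul_ite, mul_one, mul_zero,
        ite_mul, zero_mul]
      simp
    have h2 : b2 (Fin.last (m + 1)) = 0 := by
      simp [hb2, Pi.single_eq_of_ne hlast_ne]
    simp only [Pi.sub_apply, h1, h2, zero_sub]
  have hRsq : ∀ y : Fin (m + 1) → ℂ, norm2 (b2 - Hb *ᵥ y) ^ 2
      = (∑ i, ‖(b1 - H *ᵥ y) i‖ ^ 2) + ‖c - s (b1 - H *ᵥ y)‖ ^ 2 := by
    intro y
    rw [norm2_sq, Fin.sum_univ_castSucc]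
    congr 1
    · exact Finset.sum_congr rfl fun i _ => by rw [hRtop]
    · have h3 : c - s (b1 - H *ᵥ y) = η * y (Fin.last m) := by
        rw [hs_sub, hηy y, hc]; ring
      rw [hRbot, h3, norm_neg]
  -- bridge to EuclideanSpace
  set V : (Fin (m + 1) → ℂ) → EuclideanSpace ℂ (Fin (m + 1)) :=
    fun x => (WithLp.equiv 2 (Fin (m + 1) → ℂ)).symm x with hV
  have hVsum : ∀ x : Fin (m + 1) → ℂ, ‖V x‖ ^ 2 = ∑ i, ‖x i‖ ^ 2 := by
    intro x
    rw [EuclideanSpace.norm_eq, Real.sq_sqrt (by positivity)]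
    rfl
  have hVinner : ∀ x y : Fin (m + 1) → ℂ,
      (inner ℂ (V x) (V y) : ℂ) = ∑ i, starRingEnd ℂ (x i) * y i := by
    intro x y
    simp [PiLp.inner_apply, RCLike.inner_apply', hV]
    exact Finset.sum_congr rfl fun i _ => mul_comm _ _
  have hs_inner : ∀ u : Fin (m + 1) → ℂ, s u = inner ℂ (V cd) (V u) := by
    intro u
    rw [hVinner]
    simp [hs, hcd]
  have hAcd : ‖V cd‖ ^ 2 = A := by
    rw [hVsum, hA]
    exact Finset.sum_congr rfl fun i _ => by simp [hcd]
  have hVsub : ∀ x y : Fin (m + 1) → ℂ, V (x - y) = V x - V y := fun _ _ => rfl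
  have hVsmul : ∀ (a : ℂ) (x : Fin (m + 1) → ℂ), V (a • x) = a • V x := fun _ _ => rfl
  have hKey : ∀ u : Fin (m + 1) → ℂ,
      (∑ i, ‖u i‖ ^ 2) + ‖c - s u‖ ^ 2
        = ‖k‖ ^ 2 * (1 + A) + (∑ i, ‖(u - us) i‖ ^ 2) + ‖s (u - us)‖ ^ 2 := by
    intro u
    have h := key_identity (V cd) k (V u)
    have hcast : ((‖V cd‖ : ℂ)) ^ 2 = ((1 + A : ℝ) : ℂ) - 1 := by
      push_cast [← hAcd]
      ring
    rw [hcast] at h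
    have hc' : k * (((1 + A : ℝ) : ℂ) - 1 + 1) = c := by rw [hck]; ring
    rw [show (1 : ℂ) + (((1 + A : ℝ) : ℂ) - 1) = ((1 + A : ℝ) : ℂ) - 1 + 1 by ring, hc'] at h
    have hVu : V u - k • V cd = V (u - us) := by
      rw [hVsub, hus, hVsmul]
    rw [hVu] at h
    rw [← hVsum u, hs_inner u, h, hAcd, hVsum (u - us), hs_inner (u - us)]
  -- the candidate z achieves the minimum value
  have hz' : b1 - H *ᵥ z = us := by
    rw [hz, hHI, sub_sub_cancel]
  have hs_us : s us = k * ((A : ℝ) : ℂ) := by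
    have hj : ∀ j, d j * us j = k * ((‖d j‖ ^ 2 : ℝ) : ℂ) := by
      intro j
      have h1 : d j * starRingEnd ℂ (d j) = ((‖d j‖ ^ 2 : ℝ) : ℂ) := by
        rw [Complex.mul_conj]
        norm_cast
        rw [Complex.normSq_eq_norm_sq]
      simp only [hus, hcd, Pi.smul_apply, smul_eq_mul]
      calc d j * (k * starRingEnd ℂ (d j)) = k * (d j * starRingEnd ℂ (d j)) := by ring
        _ = k * ((‖d j‖ ^ 2 : ℝ) : ℂ) := by rw [h1]
    show (∑ j, d j * us j) = k * ((A : ℝ) : ℂ)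
    rw [Finset.sum_congr rfl fun j _ => hj j, ← Finset.mul_sum, hA]
    push_cast
    ring
  have hmin : norm2 (b2 - Hb *ᵥ z) ^ 2 = ‖k‖ ^ 2 * (1 + A) := by
    rw [hRsq z, hz', hKey us]
    simp [hs]
  have hgm : norm2 (b2 - Hb *ᵥ yg) ^ 2 ≤ ‖k‖ ^ 2 * (1 + A) := by
    rw [← hmin]
    exact pow_le_pow_left₀ (norm2_nonneg _) (hyg z) 2
  have hident : norm2 (b2 - Hb *ᵥ yg) ^ 2
      = ‖k‖ ^ 2 * (1 + A) + (∑ i, ‖(ug - us) i‖ ^ 2) + ‖s (ug - us)‖ ^ 2 := by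
    rw [hRsq yg, ← hug, hKey ug]
  have hug_eq : ug = us := by
    have hsum0 : (∑ i, ‖(ug - us) i‖ ^ 2) ≤ 0 := by
      have h1 : (0 : ℝ) ≤ ‖s (ug - us)‖ ^ 2 := by positivity
      linarith [hgm, hident.symm.le, hident.le]
    funext i
    have hterm : ‖(ug - us) i‖ ^ 2 = 0 := by
      have h2 : ‖(ug - us) i‖ ^ 2 ≤ ∑ j, ‖(ug - us) j‖ ^ 2 :=
        Finset.single_le_sum (f := fun j => ‖(ug - us) j‖ ^ 2)
          (fun j _ => by positivity) (Finset.mem_univ i)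
      have h3 : (0 : ℝ) ≤ ‖(ug - us) i‖ ^ 2 := by positivity
      linarith
    have h4 : (ug - us) i = 0 := by
      rwa [pow_eq_zero_iff (two_ne_zero), norm_eq_zero] at hterm
    have h5 := sub_eq_zero.mp h4
    exact h5
  -- residual components
  have hHyf : H *ᵥ yf = b1 := by rw [hyf]; exact hHI b1
  have hRf_sq : norm2 (b2 - Hb *ᵥ yf) ^ 2 = ‖c‖ ^ 2 := by
    rw [hRsq yf, hHyf]
    simp [hs]
  have hRf_norm : norm2 (b2 - Hb *ᵥ yf) = ‖c‖ := by
    have := hRf_sq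
    nlinarith [norm2_nonneg (b2 - Hb *ᵥ yf), norm_nonneg c]
  -- difference of residuals
  have hdiff_sq : norm2 ((b2 - Hb *ᵥ yf) - (b2 - Hb *ᵥ yg)) ^ 2
      = ‖k‖ ^ 2 * (A * (1 + A)) := by
    rw [norm2_sq, Fin.sum_univ_castSucc]
    have htop : ∀ i : Fin (m + 1),
        ((b2 - Hb *ᵥ yf) - (b2 - Hb *ᵥ yg)) (Fin.castSucc i) = -(us i) := by
      intro i
      have e1 := hRtop yf i
      have e2 := hRtop yg i
      rw [hHyf] at e1
      have e1' : (b2 - Hb *ᵥ yf) i.castSucc = 0 := by rw [e1, sub_self, Pi.zero_apply]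
      rw [Pi.sub_apply, e1', e2, ← hug, hug_eq, zero_sub]
    have hbot : ((b2 - Hb *ᵥ yf) - (b2 - Hb *ᵥ yg)) (Fin.last (m + 1))
        = -(k * ((A : ℝ) : ℂ)) := by
      have e1 := hRbot yf
      have e2 := hRbot yg
      have e3 : η * yf (Fin.last m) = c := by
        rw [hyf, ← hs_eta, hc]
      have e4 : η * yg (Fin.last m) = c - s ug := by
        rw [hηy yg]
        have : H *ᵥ yg = b1 - ug := by rw [hug, sub_sub_cancel]
        rw [this, hs_sub, hc]
      rw [Pi.sub_apply, e1, e2, e3, e4, hug_eq, hs_us]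
      ring
    have hsum : ∑ i : Fin (m + 1),
        ‖((b2 - Hb *ᵥ yf) - (b2 - Hb *ᵥ yg)) (Fin.castSucc i)‖ ^ 2 = ‖k‖ ^ 2 * A := by
      rw [hA, Finset.mul_sum]
      refine Finset.sum_congr rfl fun i _ => ?_
      rw [htop i, norm_neg, hus]
      simp only [Pi.smul_apply, smul_eq_mul, norm_mul, hcd]
      rw [mul_pow]
      congr 1
      simp
    rw [hsum, hbot, norm_neg, norm_mul]
    have : ‖((A : ℝ) : ℂ)‖ = A := by
      rw [Complex.norm_real, Real.norm_of_nonneg hA0]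
    rw [this, mul_pow]
    ring
  -- relate α and A
  have hα2 : α ^ 2 = A := by
    rw [hα, norm2_sq, hA]
    refine Finset.sum_congr rfl fun i _ => ?_
    have hw : (η • ((Hᴴ)⁻¹ *ᵥ (Pi.single (Fin.last m) 1 : Fin (m + 1) → ℂ))) i
        = η * starRingEnd ℂ (H⁻¹ (Fin.last m) i) := by
      rw [← Matrix.conjTranspose_nonsing_inv]
      simp [Matrix.mulVec, dotProduct, Matrix.conjTranspose_apply, Pi.single_apply]
    rw [hw, hd]
    simp [norm_mul]
  have hα0 : 0 ≤ α := by rw [hα]; exact norm2_nonneg _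
  -- final inequality
  have hc_norm : ‖c‖ = ‖k‖ * (1 + A) := by
    rw [hck, norm_mul, Complex.norm_real, Real.norm_of_nonneg hp.le]
  rw [hRf_norm, hc_norm, ← hα2]
  have hRHS : α * (1 + α) / (1 + α ^ 2) * (‖k‖ * (1 + α ^ 2)) = α * (1 + α) * ‖k‖ := by
    field_simp
  rw [hRHS]
  have hL0 : 0 ≤ norm2 ((b2 - Hb *ᵥ yf) - (b2 - Hb *ᵥ yg)) := norm2_nonneg _
  have hR0 : 0 ≤ α * (1 + α) * ‖k‖ := by positivity
  nlinarith [hdiff_sq, hα2, sq_nonneg (norm2 ((b2 - Hb *ᵥ yf) - (b2 - Hb *ᵥ yg)) - α * (1 + α) * ‖k‖), norm_nonneg k, sq_nonneg α, sq_nonneg (α * ‖k‖)]
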